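/- Let T be a t-norm and let R be a fuzzy T-equivalence on a set U with a dually well-ordered spectrum. If A, B ⊆ U satisfy A_E = B_E and A^E = B^E, then μ_{[A]_R} = μ_{[B]_R} and μ_{[A]^R} = μ_{[B]^R}; i.e., the map sending the crisp rough set (A_E, A^E) to the fuzzy rough set (μ_{[A]_R}, μ_{[A]^R}) is well-defined. -/
import Mathlib


open unitInterval

noncomputable section

instance : Fact ((0:ℝ) ≤ 1) := ⟨zero_le_one⟩

/-- A t-norm on the unit interval: commutative, associative, monotone in each
argument, with `1` as unit. -/
def IsTnorm (T : I → I → I) : Prop :=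
  (∀ x y, T x y = T y x) ∧
  (∀ x y z, T (T x y) z = T x (T y z)) ∧
  (∀ x₁ x₂ y, x₁ ≤ x₂ → T x₁ y ≤ T x₂ y) ∧
  (∀ x y₁ y₂, y₁ ≤ y₂ → T x y₁ ≤ T x y₂) ∧
  (∀ x, T x 1 = x)

/-- A fuzzy `T`-equivalence: reflexive, symmetric, `T`-transitive fuzzy relation. -/
def IsFuzzyTEquiv {U : Type*} (T : I → I → I) (μ : U → U → I) : Prop :=
  (∀ x, μ x x = 1) ∧ (∀ x y, μ x y = μ y x) ∧ (∀ x y z, T (μ x y) (μ y z) ≤ μ x z)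

/-- Fuzzy upper approximation of a crisp set `A`: `sup {μ x y | y ∈ A}` (`sup ∅ = 0`). -/
def upperApp {U : Type*} (μ : U → U → I) (A : Set U) (x : U) : I := sSup (μ x '' A)

/-- Fuzzy lower approximation of a crisp set `A`: `inf {1 - μ x y | y ∉ A}` (`inf ∅ = 1`). -/
def lowerApp {U : Type*} (μ : U → U → I) (A : Set U) (x : U) : I :=
  sInf ((fun y => σ (μ x y)) '' Aᶜ)

/-- The spectrum of a fuzzy relation. -/
def fuzzySpectrum {U : Type*} (μ : U → U → I) : Set I := {r | ∃ x y, μ x y = r}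

/-- `R` has a dually well-ordered spectrum: every nonempty subset of the
spectrum has a greatest element. -/
def DuallyWellOrdered {U : Type*} (μ : U → U → I) : Prop :=
  ∀ s ⊆ fuzzySpectrum μ, s.Nonempty → ∃ m ∈ s, ∀ r ∈ s, r ≤ m

/-- Upper approximation by the crisp equivalence `E = {(x,y) | μ x y = 1}`. -/
def upperE {U : Type*} (μ : U → U → I) (A : Set U) : Set U :=
  {x | ({y | μ x y = 1} ∩ A).Nonempty}

/-- Lower approximation by the crisp equivalence `E = {(x,y) | μ x y = 1}`. -/
def lowerE {U : Type*} (μ : U → U → I) (A : Set U) : Set U :=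
  {x | {y | μ x y = 1} ⊆ A}

/-- Upper approximation by the support relation `S = {(x,y) | μ x y > 0}`. -/
def upperS {U : Type*} (μ : U → U → I) (A : Set U) : Set U :=
  {x | ({y | 0 < μ x y} ∩ A).Nonempty}

/-- Lower approximation by the support relation `S = {(x,y) | μ x y > 0}`. -/
def lowerS {U : Type*} (μ : U → U → I) (A : Set U) : Set U :=
  {x | {y | 0 < μ x y} ⊆ A}

/-- the map `(A_E, A^E) ↦ (μ_[A]_R, μ_[A]^R)` is well-defined. -/

lemma upper_aux {U : Type*} (T : I → I → I) (μ : U → U → I)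
    (hT : IsTnorm T) (hR : IsFuzzyTEquiv T μ) {A B : Set U}
    (h : upperE μ A ⊆ upperE μ B) (x : U) : upperApp μ A x ≤ upperApp μ B x := by
  apply sSup_le
  rintro r ⟨y, hyA, rfl⟩
  have hyE : y ∈ upperE μ A := ⟨y, hR.1 y, hyA⟩
  obtain ⟨z, hz1, hzB⟩ := h hyE
  calc μ x y = T (μ x y) 1 := (hT.2.2.2.2 _).symm
    _ = T (μ x y) (μ y z) := by rw [hz1]
    _ ≤ μ x z := hR.2.2 x y z
    _ ≤ sSup (μ x '' B) := le_sSup ⟨z, hzB, rfl⟩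

lemma upper_eq {U : Type*} (T : I → I → I) (μ : U → U → I)
    (hT : IsTnorm T) (hR : IsFuzzyTEquiv T μ) {A B : Set U}
    (h : upperE μ A = upperE μ B) : upperApp μ A = upperApp μ B := by
  funext x
  exact le_antisymm (upper_aux T μ hT hR h.le x) (upper_aux T μ hT hR h.ge x)

lemma symm_sInf_image (s : Set I) : sInf ((fun t => σ t) '' s) = σ (sSup s) := by
  have hanti : ∀ a b : I, a ≤ b → σ b ≤ σ a := fun a b hab =>
    Subtype.coe_le_coe.1 (by
      rw [unitInterval.coe_symm_eq, unitInterval.coe_symm_eq]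
      have := Subtype.coe_le_coe.2 hab; linarith)
  apply le_antisymm
  · have : sSup s ≤ σ (sInf ((fun t => σ t) '' s)) := by
      apply sSup_le
      intro t ht
      have := hanti _ _ (sInf_le (Set.mem_image_of_mem (fun t => σ t) ht))
      rwa [unitInterval.symm_symm] at this
    have := hanti _ _ this
    rwa [unitInterval.symm_symm] at this
  · apply le_sInf
    rintro b ⟨t, ht, rfl⟩
    exact hanti _ _ (le_sSup ht)

lemma lower_as_upper {U : Type*} (μ : U → U → I) (A : Set U) (x : U) :
    lowerApp μ A x = σ (upperApp μ Aᶜ x) := by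
  rw [lowerApp, upperApp, ← symm_sInf_image, Set.image_image]

lemma upperE_compl {U : Type*} (μ : U → U → I) (A : Set U) :
    upperE μ Aᶜ = (lowerE μ A)ᶜ := by
  ext x
  simp only [upperE, lowerE, Set.mem_setOf_eq, Set.mem_compl_iff, Set.not_subset]
  constructor
  · rintro ⟨y, hy1, hyA⟩; exact ⟨y, hy1, hyA⟩
  · rintro ⟨y, hy1, hyA⟩; exact ⟨y, hy1, hyA⟩

theorem stmt7 {U : Type*} (T : I → I → I) (μ : U → U → I)
    (hT : IsTnorm T) (hR : IsFuzzyTEquiv T μ) (hD : DuallyWellOrdered μ)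
    (A B : Set U) (h₁ : lowerE μ A = lowerE μ B) (h₂ : upperE μ A = upperE μ B) :
    lowerApp μ A = lowerApp μ B ∧ upperApp μ A = upperApp μ B := by
  refine ⟨?_, upper_eq T μ hT hR h₂⟩
  have hc : upperE μ Aᶜ = upperE μ Bᶜ := by
    rw [upperE_compl, upperE_compl, h₁]
  funext x
  rw [lower_as_upper, lower_as_upper, upper_eq T μ hT hR hc]
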